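/- Let a, b ∈ F ⊆ G be the two free generators. (i) For every y ∈ Y and every g ∈ {1_G, a, b, ab}: α(g, y) = y and ρ(g, y) = τ(g); the four elements τ(1_G) = 1_G, τ(a) = (1,0), τ(b) = (0,1), τ(ab) = (1,1) are pairwise distinct, so the four pairs (g·(y), ρ*(g, (y))) — where (y) denotes the one-letter word — are pairwise distinct. (ii) For every y ∈ Y and every nonempty finite word w over X, the unordered pair {(a·(yw), ρ*(a, yw)), (b·(yw), ρ*(b, yw))} equals the unordered pair {(yw, 1_G), ((ab)·(yw), ρ*(ab, yw))}, where yw denotes the word with first letter y followed by w. -/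

import Mathlib

/-- The group `G = H × F(a,b) × ℤ × ℤ` (with `ℤ` written multiplicatively so that the product
carries a group structure). The free group on two generators is `FreeGroup Bool`, with
generators `a = .of false` and `b = .of true`. -/
abbrev GG (H : Type) : Type := H × FreeGroup Bool × Multiplicative ℤ × Multiplicative ℤ

/-- The group `K = H × F(a,b) × ℤ`. -/
abbrev KK (H : Type) : Type := H × FreeGroup Bool × Multiplicative ℤ

/-- `π₁ : G → K`, `(h,f,n,m) ↦ (h,f,n)`. -/
def pi1 {H : Type} (g : GG H) : KK H := (g.1, g.2.1, g.2.2.1)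

/-- `π₂ : G → K`, `(h,f,n,m) ↦ (h,f,m)`. -/
def pi2 {H : Type} (g : GG H) : KK H := (g.1, g.2.1, g.2.2.2)

/-- `ζ₁ : G → ℤ`, `(h,f,n,m) ↦ n`. -/
def zeta1 {H : Type} (g : GG H) : ℤ := Multiplicative.toAdd g.2.2.1

/-- `ζ₂ : G → ℤ`, `(h,f,n,m) ↦ m`. -/
def zeta2 {H : Type} (g : GG H) : ℤ := Multiplicative.toAdd g.2.2.2

/-- The exponent sum of the generator `i` in an element of the free group on two generators. -/
def expSum (i : Bool) : FreeGroup Bool →* Multiplicative ℤ :=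
  FreeGroup.lift (fun j => Multiplicative.ofAdd (if j = i then (1 : ℤ) else 0))

/-- `τ : G → G`, `(h,f,n,m) ↦ (1,1,|f|_a,|f|_b)`, the abelianization of `F` in `G`. -/
def tau {H : Type} [Group H] (g : GG H) : GG H :=
  (1, 1, expSum false g.2.1, expSum true g.2.1)

/-- The alphabet `X = Y ⊔ Z`, `Y = {yⁱ_n : n ∈ ℤ}`, `Z = {zⁱ_k : k ∈ K}`, `i ∈ {1,2}`
(`i = 1` encoded as `false`, `i = 2` as `true`). -/
inductive Letter (H : Type) : Type
  | y : Bool → ℤ → Letter H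
  | z : Bool → KK H → Letter H

/-- The letter action `α : G × X → X`:
`α(g, yⁱ_n) = yⁱ_{ζᵢ(g)+n}` and `α(g, zⁱ_k) = zⁱ_{πᵢ(g)·k}`. -/
def actL {H : Type} [Group H] (g : GG H) : Letter H → Letter H
  | Letter.y false n => Letter.y false (zeta1 g + n)
  | Letter.y true n => Letter.y true (zeta2 g + n)
  | Letter.z false k => Letter.z false (pi1 g * k)
  | Letter.z true k => Letter.z true (pi2 g * k)

/-- The restriction `ρ : G × X → G`: `ρ(g, yⁱ_n) = τ(g)` and `ρ(g, zⁱ_k) = 1`. -/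
def resL {H : Type} [Group H] (g : GG H) : Letter H → GG H
  | Letter.y _ _ => tau g
  | Letter.z _ _ => 1

/-- The action of `G` on finite words over `X`:
`g·ε = ε` and `g·(x w) = α(g,x) (ρ(g,x)·w)`. -/
def wact {H : Type} [Group H] : GG H → List (Letter H) → List (Letter H)
  | _, [] => []
  | g, x :: w => actL g x :: wact (resL g x) w

/-- The restriction of `g ∈ G` along a word: `ρ*(g,ε) = g`, `ρ*(g, x w) = ρ*(ρ(g,x), w)`. -/
def wres {H : Type} [Group H] : GG H → List (Letter H) → GG H
  | g, [] => g
  | g, x :: w => wres (resL g x) w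

/-- The generator `a ∈ F ⊆ G`. -/
def aG (H : Type) [Group H] : GG H := (1, FreeGroup.of false, 1, 1)

/-- The generator `b ∈ F ⊆ G`. -/
def bG (H : Type) [Group H] : GG H := (1, FreeGroup.of true, 1, 1)

section Aux
variable {H : Type} [Group H]

lemma tau_one : tau (1 : GG H) = 1 := by
  simp [tau, Prod.ext_iff]

lemma tau_aG : tau (aG H) = ((1, 1, Multiplicative.ofAdd 1, Multiplicative.ofAdd 0) : GG H) := by
  simp [tau, aG, expSum, Prod.ext_iff]

lemma tau_bG : tau (bG H) = ((1, 1, Multiplicative.ofAdd 0, Multiplicative.ofAdd 1) : GG H) := by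
  simp [tau, bG, expSum, Prod.ext_iff]

lemma tau_ab : tau (aG H * bG H) =
    ((1, 1, Multiplicative.ofAdd 1, Multiplicative.ofAdd 1) : GG H) := by
  simp [tau, aG, bG, expSum, Prod.ext_iff, Prod.mul_def, ← ofAdd_add]

lemma tau_triv (g : GG H) (h : g.2.1 = 1) : tau g = 1 := by
  simp [tau, h, Prod.ext_iff]

lemma resL_triv (g : GG H) (h : g.2.1 = 1) (x : Letter H) : resL g x = 1 := by
  cases x with
  | y i n => simp [resL, tau_triv g h]
  | z i k => simp [resL]

lemma actL_one (x : Letter H) : actL (1 : GG H) x = x := by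
  cases x with
  | y i n => cases i <;> simp [actL, zeta1, zeta2]
  | z i k => cases i <;> simp [actL, pi1, pi2, Prod.ext_iff]

lemma wact_one (w : List (Letter H)) : wact (1 : GG H) w = w := by
  induction w with
  | nil => rfl
  | cons x w ih => rw [wact, actL_one, resL_triv 1 rfl, ih]

lemma wres_one (w : List (Letter H)) : wres (1 : GG H) w = 1 := by
  induction w with
  | nil => rfl
  | cons x w ih => rw [wres, resL_triv 1 rfl, ih]

lemma wact_triv (g : GG H) (h : g.2.1 = 1) (x : Letter H) (w : List (Letter H)) :
    wact g (x :: w) = actL g x :: w := by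
  rw [wact, resL_triv g h, wact_one]

lemma wres_triv (g : GG H) (h : g.2.1 = 1) (x : Letter H) (w : List (Letter H)) :
    wres g (x :: w) = 1 := by
  rw [wres, resL_triv g h, wres_one]

lemma zeta1_aG : zeta1 (aG H) = 0 := rfl
lemma zeta2_aG : zeta2 (aG H) = 0 := rfl

lemma actL_y_fix (g : GG H) (h1 : zeta1 g = 0) (h2 : zeta2 g = 0) (i : Bool) (n : ℤ) :
    actL g (Letter.y i n) = Letter.y i n := by
  cases i <;> simp [actL, h1, h2]

end Aux

/-- (i) Every `g ∈ {1, a, b, ab}` fixes each letter `y ∈ Y` with restriction `τ(g)`; the values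
`τ(1) = 1`, `τ(a) = (1,0)`, `τ(b) = (0,1)`, `τ(ab) = (1,1)` are pairwise distinct, so the four
pairs `(g·(y), ρ*(g,(y)))` are pairwise distinct. (ii) For every `y ∈ Y` and nonempty word `w`,
the unordered pair `{(a·(yw), ρ*(a,yw)), (b·(yw), ρ*(b,yw))}` equals
`{(yw, 1), ((ab)·(yw), ρ*(ab,yw))}`. -/

theorem stmt10 (H : Type) [Group H] :
    (∀ (i : Bool) (n : ℤ), ∀ g ∈ ({1, aG H, bG H, aG H * bG H} : Set (GG H)),
      actL g (Letter.y i n) = Letter.y i n ∧ resL g (Letter.y i n) = tau g) ∧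
    (tau (1 : GG H) = 1 ∧
      tau (aG H) = ((1, 1, Multiplicative.ofAdd 1, Multiplicative.ofAdd 0) : GG H) ∧
      tau (bG H) = ((1, 1, Multiplicative.ofAdd 0, Multiplicative.ofAdd 1) : GG H) ∧
      tau (aG H * bG H) = ((1, 1, Multiplicative.ofAdd 1, Multiplicative.ofAdd 1) : GG H)) ∧
    List.Pairwise (· ≠ ·) [tau (1 : GG H), tau (aG H), tau (bG H), tau (aG H * bG H)] ∧
    (∀ (i : Bool) (n : ℤ),
      List.Pairwise (· ≠ ·)
        (([1, aG H, bG H, aG H * bG H] : List (GG H)).map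
          (fun g => (wact g [Letter.y i n], wres g [Letter.y i n])))) ∧
    (∀ (i : Bool) (n : ℤ) (w : List (Letter H)), w ≠ [] →
      ({(wact (aG H) (Letter.y i n :: w), wres (aG H) (Letter.y i n :: w)),
        (wact (bG H) (Letter.y i n :: w), wres (bG H) (Letter.y i n :: w))} :
          Set (List (Letter H) × GG H)) =
      {(Letter.y i n :: w, (1 : GG H)),
        (wact (aG H * bG H) (Letter.y i n :: w), wres (aG H * bG H) (Letter.y i n :: w))}) := by
  have hz1 : ∀ g ∈ ({1, aG H, bG H, aG H * bG H} : Set (GG H)), zeta1 g = 0 ∧ zeta2 g = 0 := by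
    rintro g (rfl | rfl | rfl | rfl) <;> constructor <;> rfl
  have hfix : ∀ (i : Bool) (n : ℤ), ∀ g ∈ ({1, aG H, bG H, aG H * bG H} : Set (GG H)),
      actL g (Letter.y i n) = Letter.y i n ∧ resL g (Letter.y i n) = tau g := by
    intro i n g hg
    exact ⟨actL_y_fix g (hz1 g hg).1 (hz1 g hg).2 i n, rfl⟩
  have hne01 : Multiplicative.ofAdd (0 : ℤ) ≠ Multiplicative.ofAdd 1 := by decide
  have hne10 : Multiplicative.ofAdd (1 : ℤ) ≠ Multiplicative.ofAdd 0 := by decide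
  have hone : (1 : Multiplicative ℤ) = Multiplicative.ofAdd 0 := rfl
  have hneL : ∀ (c d c' d' : Multiplicative ℤ), c ≠ c' →
      ((1, 1, c, d) : GG H) ≠ ((1, 1, c', d') : GG H) :=
    fun _ _ _ _ h heq => h (congrArg (fun g : GG H => g.2.2.1) heq)
  have hneR : ∀ (c d c' d' : Multiplicative ℤ), d ≠ d' →
      ((1, 1, c, d) : GG H) ≠ ((1, 1, c', d') : GG H) :=
    fun _ _ _ _ h heq => h (congrArg (fun g : GG H => g.2.2.2) heq)
  have hone' : (1 : GG H) = ((1, 1, Multiplicative.ofAdd 0, Multiplicative.ofAdd 0) : GG H) := rfl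
  have hpw : List.Pairwise (· ≠ ·)
      [tau (1 : GG H), tau (aG H), tau (bG H), tau (aG H * bG H)] := by
    rw [tau_one, tau_aG, tau_bG, tau_ab, hone']
    refine List.Pairwise.cons ?_ (List.Pairwise.cons ?_ (List.Pairwise.cons ?_
      (List.Pairwise.cons (fun t ht => absurd ht List.not_mem_nil) List.Pairwise.nil)))
    · rintro t ht
      simp only [List.mem_cons, List.mem_singleton, List.not_mem_nil, or_false] at ht
      rcases ht with rfl | rfl | rfl
      · exact hneL _ _ _ _ hne01
      · exact hneR _ _ _ _ hne01
      · exact hneL _ _ _ _ hne01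
    · rintro t ht
      simp only [List.mem_cons, List.mem_singleton, List.not_mem_nil, or_false] at ht
      rcases ht with rfl | rfl
      · exact hneL _ _ _ _ hne10
      · exact hneR _ _ _ _ hne01
    · rintro t ht
      simp only [List.mem_singleton, List.mem_cons, List.not_mem_nil, or_false] at ht
      subst ht
      exact hneL _ _ _ _ hne01
  refine ⟨hfix, ⟨tau_one, tau_aG, tau_bG, tau_ab⟩, hpw, ?_, ?_⟩
  · intro i n
    have key : ∀ g ∈ ({1, aG H, bG H, aG H * bG H} : Set (GG H)),
        (wact g [Letter.y i n], wres g [Letter.y i n]) = ([Letter.y i n], tau g) := by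
      intro g hg
      have := hfix i n g hg
      simp [wact, wres, this.1, this.2]
    simp only [List.map_cons, List.map_nil]
    rw [key 1 (by simp), key (aG H) (by simp), key (bG H) (by simp),
      key (aG H * bG H) (by simp)]
    have : List.Pairwise (· ≠ ·)
        ([tau (1 : GG H), tau (aG H), tau (bG H), tau (aG H * bG H)].map
          (fun t => (([Letter.y i n] : List (Letter H)), t))) := by
      exact hpw.map _ (fun _ _ h heq => h (congrArg Prod.snd heq))
    simpa using this
  · intro i n w hw
    obtain ⟨x, w', rfl⟩ := List.exists_cons_of_ne_nil hw
    have ha2 : (aG H).2.1 = FreeGroup.of false := rfl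
    -- expand the first step of wact/wres for a, b, ab
    have expand : ∀ g ∈ ({1, aG H, bG H, aG H * bG H} : Set (GG H)),
        wact g (Letter.y i n :: x :: w') = Letter.y i n :: actL (tau g) x :: w' ∧
        wres g (Letter.y i n :: x :: w') = 1 := by
      intro g hg
      have h1 := hfix i n g hg
      have htg : (tau g).2.1 = 1 := rfl
      constructor
      · rw [wact, h1.1, h1.2, wact_triv _ htg]
      · rw [wres, h1.2, wres_triv _ htg]
    have ea := expand (aG H) (by simp)
    have eb := expand (bG H) (by simp)
    have eab := expand (aG H * bG H) (by simp)
    have e1 := expand 1 (by simp)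
    rw [ea.1, ea.2, eb.1, eb.2, eab.1, eab.2]
    have h1x : actL (tau (1 : GG H)) x = x := by rw [tau_one]; exact actL_one x
    -- case on the letter x
    have hcase : (actL (tau (aG H)) x = x ∧ actL (tau (bG H)) x = actL (tau (aG H * bG H)) x) ∨
        (actL (tau (bG H)) x = x ∧ actL (tau (aG H)) x = actL (tau (aG H * bG H)) x) := by
      rw [tau_aG, tau_bG, tau_ab]
      cases x with
      | y j m =>
        cases j
        · exact Or.inr ⟨by simp [actL, zeta1], rfl⟩
        · exact Or.inl ⟨by simp [actL, zeta2], rfl⟩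
      | z j k =>
        cases j
        · exact Or.inr ⟨by simp [actL, pi1, Prod.ext_iff], rfl⟩
        · exact Or.inl ⟨by simp [actL, pi2, Prod.ext_iff], rfl⟩
    rcases hcase with ⟨h1, h2⟩ | ⟨h1, h2⟩
    · rw [h1, h2]
    · rw [h1, h2, Set.pair_comm]
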